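/- Let t₁ be the root of Δ₁(t) = t^4 - 7t^3 + 11t^2 - 7t + 1 of largest absolute value and t₂ the root of Δ₂(t) = t^4 + 7t^3 - 15t^2 + 7t + 1 of largest absolute value. Then |t₁|^6 = |t₂|^8. Equivalently, 6·ln m(Δ₂) = 8·ln m(Δ₁), where m denotes the Mahler measure. -/

import Mathlib

open Polynomial

/-- The Mahler measure of a complex polynomial: `exp (∫_{S¹} ln |p(z)|)` with the
circle normalized to total measure 1. -/
noncomputable def mahlerMeasureCircle (p : Polynomial ℂ) : ℝ :=
  Real.exp (∫ t in (0:ℝ)..1,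
    Real.log (‖p.eval (Complex.exp (2 * Real.pi * t * Complex.I))‖))


section MahlerAux

open Real MeasureTheory Set intervalIntegral Function

/-- `Real.log` is interval integrable on every interval. -/
lemma aux_logII : ∀ a b : ℝ, IntervalIntegrable Real.log volume a b := by
  have key : IntegrableOn Real.log (Set.Ioc (0:ℝ) 1) volume := by
    have hg : IntegrableOn (fun x : ℝ => 2 * x ^ (-(1:ℝ)/2)) (Set.Ioc (0:ℝ) 1) volume := by
      have h := (intervalIntegral.intervalIntegrable_rpow' (a := (0:ℝ)) (b := 1)
        (by norm_num : (-1:ℝ) < -(1:ℝ)/2)).const_mul 2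
      rw [intervalIntegrable_iff, uIoc_of_le (by norm_num : (0:ℝ) ≤ 1)] at h
      exact h
    refine hg.mono' Real.measurable_log.aestronglyMeasurable ?_
    refine (ae_restrict_iff' measurableSet_Ioc).2 (ae_of_all _ fun x hx => ?_)
    have hx0 : 0 < x := hx.1
    have hx1 : x ≤ 1 := hx.2
    have hrp : 0 < x ^ (-(1:ℝ)/2) := Real.rpow_pos_of_pos hx0 _
    have hlog : Real.log (x ^ (-(1:ℝ)/2)) ≤ x ^ (-(1:ℝ)/2) - 1 :=
      Real.log_le_sub_one_of_pos hrp
    rw [Real.log_rpow hx0] at hlog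
    have hls : Real.log x ≤ 0 := Real.log_nonpos hx0.le hx1
    rw [Real.norm_eq_abs, abs_of_nonpos hls]
    linarith
  have h01 : IntervalIntegrable Real.log volume 0 1 := by
    rw [intervalIntegrable_iff, uIoc_of_le (by norm_num : (0:ℝ) ≤ 1)]; exact key
  have hpos : ∀ b : ℝ, 0 ≤ b → IntervalIntegrable Real.log volume 0 b := by
    intro b hb
    rcases le_total b 1 with h | h
    · refine h01.mono_set ?_
      rw [Set.uIcc_of_le hb, Set.uIcc_of_le (by norm_num : (0:ℝ) ≤ 1)]
      exact Set.Icc_subset_Icc le_rfl h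
    · refine h01.trans ?_
      refine (Real.continuousOn_log.mono ?_).intervalIntegrable
      intro x hx
      rw [Set.uIcc_of_le h] at hx
      simp only [Set.mem_compl_iff, Set.mem_singleton_iff]
      exact ne_of_gt (lt_of_lt_of_le one_pos hx.1)
  have half : ∀ c : ℝ, IntervalIntegrable Real.log volume 0 c := by
    intro c
    rcases le_total 0 c with h | h
    · exact hpos c h
    · have h2 := (hpos (-c) (by linarith)).comp_mul_left (c := -1)
      have h3 : IntervalIntegrable (fun x => Real.log (-1 * x)) volume 0 c := by
        simpa using h2
      have h4 : (fun x => Real.log (-1 * x)) = Real.log := by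
        funext x; rw [neg_one_mul, Real.log_neg_eq_log]
      rwa [h4] at h3
  exact fun a b => (half a).symm.trans (half b)

lemma aux_logsin_per : Function.Periodic (fun x => Real.log (Real.sin x)) π := by
  intro x; simp only [Real.sin_add_pi, Real.log_neg_eq_log]

/-- Periodic extension of interval integrability. -/
lemma aux_periodII {f : ℝ → ℝ} {T c : ℝ} (hT : 0 < T) (hp : Function.Periodic f T)
    (h : IntervalIntegrable f volume c (c + T)) :
    ∀ a b : ℝ, IntervalIntegrable f volume a b := by
  have step : ∀ n : ℕ, IntervalIntegrable f volume c (c + n * T) := by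
    intro n
    induction n with
    | zero => simp
    | succ n ih =>
      refine ih.trans ?_
      have h2 := h.comp_add_right (-(n * T))
      have h3 : (fun x => f (x + -(n * T))) = f := by
        funext x; rw [← sub_eq_add_neg, (hp.nat_mul n).sub_eq]
      rw [h3] at h2
      have h4 : IntervalIntegrable f volume (c + n * T) (c + T + n * T) := by
        simpa [sub_neg_eq_add] using h2
      refine h4.mono_set ?_
      rw [show c + T + (n:ℝ) * T = c + ((n:ℝ)+1) * T by ring,
        show c + ((n:ℕ)+1 : ℕ) * T = c + ((n:ℝ)+1) * T by push_cast; ring]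
  have both : ∀ n : ℕ, IntervalIntegrable f volume (c - n * T) (c + n * T) := by
    intro n
    have h2 := (step (2 * n)).comp_add_right (n * T)
    have h3 : (fun x => f (x + n * T)) = f := by
      funext x; exact (hp.nat_mul n) x
    rw [h3] at h2
    refine h2.mono_set ?_
    have h5 : c + ((2 * n : ℕ):ℝ) * T - (n:ℝ) * T = c + (n:ℝ) * T := by push_cast; ring
    rw [h5]
  intro a b
  obtain ⟨n, hn⟩ := exists_nat_ge ((max (c - min a b) (max a b - c)) / T)
  have hnT : max (c - min a b) (max a b - c) ≤ n * T := by
    rw [div_le_iff₀ hT] at hn; linarith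
  refine (both n).mono_set ?_
  have h1 : c - n * T ≤ min a b := by
    have := le_trans (le_max_left _ _) hnT; linarith
  have h2 : max a b ≤ c + n * T := by
    have := le_trans (le_max_right _ _) hnT; linarith
  have hcc : c - n * T ≤ c + n * T := by
    have : (0:ℝ) ≤ n * T := by positivity
    linarith
  rw [Set.uIcc_of_le hcc]
  intro x hx
  have hx' := Set.mem_uIcc.1 hx
  constructor
  · rcases hx' with ⟨h3, _⟩ | ⟨h3, _⟩ <;>
      [exact le_trans (le_trans h1 (min_le_left a b)) h3;
       exact le_trans (le_trans h1 (min_le_right a b)) h3]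
  · rcases hx' with ⟨_, h4⟩ | ⟨_, h4⟩ <;>
      [exact le_trans h4 (le_trans (le_max_right a b) h2);
       exact le_trans h4 (le_trans (le_max_left a b) h2)]

/-- `log ∘ sin` is interval integrable on every interval. -/
lemma aux_logsinII : ∀ a b : ℝ, IntervalIntegrable (fun x => Real.log (Real.sin x)) volume a b := by
  have hmeas : AEStronglyMeasurable (fun x => Real.log (Real.sin x)) (volume : Measure ℝ) :=
    (Real.measurable_log.comp Real.continuous_sin.measurable).aestronglyMeasurable
  have core : IntervalIntegrable (fun x => Real.log (Real.sin x)) volume (-(π/2)) (-(π/2) + π) := by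
    have hb : -(π/2) + π = π/2 := by ring
    rw [hb]
    have hle : -(π/2) ≤ π/2 := by
      have := Real.pi_pos; linarith
    refine IntervalIntegrable.mono_fun'
      ((aux_logII (-(π/2)) (π/2)).abs.add (_root_.intervalIntegrable_const (c := Real.log (π/2))))
      (hmeas.restrict) ?_
    refine (ae_restrict_iff' measurableSet_uIoc).2 (ae_of_all _ fun x hx => ?_)
    rw [Set.uIoc_of_le hle] at hx
    by_cases hx0 : x = 0
    · subst hx0
      simp only [Real.sin_zero, Real.log_zero, Real.norm_eq_abs, abs_zero]
      have h2 : (0:ℝ) ≤ |Real.log 0| := abs_nonneg _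
      have h3 : (0:ℝ) ≤ Real.log (π/2) :=
        Real.log_nonneg (by nlinarith [Real.pi_gt_three])
      positivity
    · have hπ := Real.pi_pos
      have hxa : 0 < |x| := abs_pos.2 hx0
      have hxle : |x| ≤ π/2 := by
        rw [abs_le]; exact ⟨by linarith [hx.1], hx.2⟩
      have hsin_lb : 2/π * |x| ≤ |Real.sin x| := by
        rcases le_or_gt 0 x with hs | hs
        · rw [abs_of_nonneg hs,
            abs_of_nonneg (Real.sin_nonneg_of_nonneg_of_le_pi hs (by linarith [hx.2]))]
          exact Real.mul_le_sin hs (by rwa [abs_of_nonneg hs] at hxle)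
        · rw [abs_of_neg hs,
            abs_of_nonpos (Real.sin_nonpos_of_nonpos_of_neg_pi_le hs.le (by linarith [hx.1]))]
          have := Real.mul_le_sin (by linarith : (0:ℝ) ≤ -x)
            (by rw [abs_of_neg hs] at hxle; exact hxle)
          rw [Real.sin_neg] at this; linarith
      have hsin_ub : |Real.sin x| ≤ |x| := Real.abs_sin_le_abs
      have hsin_pos : 0 < |Real.sin x| := lt_of_lt_of_le (by positivity) hsin_lb
      simp only [Real.norm_eq_abs, ← Real.log_abs (Real.sin x)]
      have hlog_le : Real.log |Real.sin x| ≤ Real.log |x| :=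
        Real.log_le_log hsin_pos hsin_ub
      have hlog_ge : Real.log |x| - Real.log (π/2) ≤ Real.log |Real.sin x| := by
        have h5 : Real.log (2/π * |x|) ≤ Real.log |Real.sin x| :=
          Real.log_le_log (by positivity) hsin_lb
        rw [Real.log_mul (by positivity) (ne_of_gt hxa),
          Real.log_div (by norm_num) (ne_of_gt hπ)] at h5
        have hl2 : Real.log (π/2) = Real.log π - Real.log 2 :=
          Real.log_div (ne_of_gt hπ) (by norm_num)
        linarith
      have hub : abs (Real.log |Real.sin x|) ≤ abs (Real.log |x|) + Real.log (π/2) := by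
        rw [abs_le]
        constructor
        · have : -(abs (Real.log |x|)) ≤ Real.log |x| := neg_abs_le _
          linarith
        · have : Real.log |x| ≤ abs (Real.log |x|) := le_abs_self _
          have h6 : (0:ℝ) ≤ Real.log (π/2) :=
            Real.log_nonneg (by nlinarith [Real.pi_gt_three])
          linarith
      simpa [Real.log_abs] using hub
  exact aux_periodII Real.pi_pos aux_logsin_per core

lemma aux_logsin_affineII (k m : ℝ) (hk : k ≠ 0) (a b : ℝ) :
    IntervalIntegrable (fun t => Real.log (Real.sin (k * t + m))) volume a b := by
  have h1 := (aux_logsinII (k * a + m) (k * b + m)).comp_add_right m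
  have h2 := h1.comp_mul_left (c := k)
  have e1 : (k * a + m - m) / k = a := by field_simp; ring
  have e2 : (k * b + m - m) / k = b := by field_simp; ring
  rw [e1, e2] at h2
  exact h2

/-- Level sets of (affine-precomposed) cosine are countable. -/
lemma aux_cos_level_countable (A B v : ℝ) (hA : A ≠ 0) :
    Set.Countable {t : ℝ | Real.cos (A * t + B) = v} := by
  by_cases hv : |v| ≤ 1
  · set α := Real.arccos v with hα
    have hcos : Real.cos α = v :=
      Real.cos_arccos (by linarith [abs_le.1 hv]) (by linarith [abs_le.1 hv])
    have hsub : {t : ℝ | Real.cos (A * t + B) = v} ⊆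
        (Set.range fun n : ℤ => (2 * n * π - B - α) / A) ∪
        (Set.range fun n : ℤ => (2 * n * π - B + α) / A) := by
      intro t ht
      simp only [Set.mem_setOf_eq] at ht
      have h0 : Real.cos (A * t + B) - Real.cos α = 0 := by rw [ht, hcos, sub_self]
      rw [Real.cos_sub_cos] at h0
      have h1 : Real.sin ((A * t + B + α) / 2) = 0 ∨ Real.sin ((A * t + B - α) / 2) = 0 := by
        rcases mul_eq_zero.1 h0 with h | h
        · rcases mul_eq_zero.1 h with h | h
          · norm_num at h
          · exact Or.inl h
        · exact Or.inr h
      rcases h1 with h | h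
      · obtain ⟨n, hn⟩ := Real.sin_eq_zero_iff.1 h
        refine Or.inl ⟨n, ?_⟩
        field_simp at hn ⊢
        linarith
      · obtain ⟨n, hn⟩ := Real.sin_eq_zero_iff.1 h
        refine Or.inr ⟨n, ?_⟩
        field_simp at hn ⊢
        linarith
    exact Set.Countable.mono hsub ((Set.countable_range _).union (Set.countable_range _))
  · convert Set.countable_empty
    rw [Set.eq_empty_iff_forall_notMem]
    intro t ht
    simp only [Set.mem_setOf_eq] at ht
    rw [← ht] at hv
    exact hv (abs_cos_le_one _)

lemma aux_log_cos_contII (v : ℝ) (hv : ∀ x : ℝ, -2 ≤ x → x ≤ 2 → x ≠ v) (a b : ℝ) :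
    IntervalIntegrable (fun t => Real.log (2 * Real.cos (2 * π * t) - v)) volume a b := by
  have hne : ∀ t : ℝ, 2 * Real.cos (2 * π * t) - v ≠ 0 := by
    intro t
    have h1 := Real.neg_one_le_cos (2 * π * t)
    have h2 := Real.cos_le_one (2 * π * t)
    exact sub_ne_zero.2 (hv _ (by linarith) (by linarith))
  have hc : Continuous fun t : ℝ => 2 * Real.cos (2 * π * t) - v := by fun_prop
  exact (hc.log hne).intervalIntegrable a b

set_option maxHeartbeats 1000000 in
/-- Interval integrability of `log ((2cos(2πt) - u)(2cos(2πt) - v))` with `u` inside and `v`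
outside `[-2,2]`. -/
lemma aux_quadII (u v : ℝ) (hu1 : -2 < u) (hu2 : u < 2)
    (hv : ∀ x : ℝ, -2 ≤ x → x ≤ 2 → x ≠ v) (a b : ℝ) :
    IntervalIntegrable
      (fun t => Real.log ((2 * Real.cos (2 * π * t) - u) * (2 * Real.cos (2 * π * t) - v)))
      volume a b := by
  set α := Real.arccos (u / 2) with hαdef
  have hπ := Real.pi_pos
  have hcosα : Real.cos α = u / 2 := Real.cos_arccos (by linarith) (by linarith)
  set F : ℝ → ℝ := fun t => Real.log 4 + Real.log (Real.sin (π * t + α / 2)) +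
    Real.log (Real.sin (π * t - α / 2)) + Real.log (2 * Real.cos (2 * π * t) - v) with hF
  have hFint : IntervalIntegrable F volume a b := by
    refine (((_root_.intervalIntegrable_const).add
      (aux_logsin_affineII π (α / 2) (ne_of_gt hπ) a b)).add ?_).add (aux_log_cos_contII v hv a b)
    have := aux_logsin_affineII π (-(α / 2)) (ne_of_gt hπ) a b
    simpa [sub_eq_add_neg] using this
  have hN : volume {t : ℝ | Real.cos (2 * π * t) = u / 2} = 0 := by
    have := (aux_cos_level_countable (2 * π) 0 (u / 2)
      (by positivity)).measure_zero (μ := volume)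
    simpa using this
  have hae : ∀ᵐ t : ℝ, t ∉ {t : ℝ | Real.cos (2 * π * t) = u / 2} := by
    rw [← MeasureTheory.measure_eq_zero_iff_ae_notMem] at *
    simpa using hN
  have heq : ∀ᵐ t : ℝ,
      F t = Real.log ((2 * Real.cos (2 * π * t) - u) * (2 * Real.cos (2 * π * t) - v)) := by
    refine hae.mono fun t ht => ?_
    simp only [Set.mem_setOf_eq] at ht
    have harg1 : (2 * π * t + α) / 2 = π * t + α / 2 := by ring
    have harg2 : (2 * π * t - α) / 2 = π * t - α / 2 := by ring
    have hfact : 2 * Real.cos (2 * π * t) - u =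
        -4 * (Real.sin (π * t + α / 2) * Real.sin (π * t - α / 2)) := by
      have h := Real.cos_sub_cos (2 * π * t) α
      rw [harg1, harg2] at h
      have h9 : 2 * Real.cos (2 * π * t) - u = 2 * (Real.cos (2 * π * t) - Real.cos α) := by
        rw [hcosα]; ring
      rw [h9, h]; ring
    have hune : 2 * Real.cos (2 * π * t) - u ≠ 0 := by
      intro h
      exact ht (by linarith [sub_eq_zero.1 h])
    have hs1 : Real.sin (π * t + α / 2) ≠ 0 := by
      intro h; rw [h] at hfact; simp at hfact; exact hune (by linarith [hfact])
    have hs2 : Real.sin (π * t - α / 2) ≠ 0 := by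
      intro h; rw [h] at hfact; simp at hfact; exact hune (by linarith [hfact])
    have hvne : 2 * Real.cos (2 * π * t) - v ≠ 0 := by
      have h1 := Real.neg_one_le_cos (2 * π * t)
      have h2 := Real.cos_le_one (2 * π * t)
      exact sub_ne_zero.2 (hv _ (by linarith) (by linarith))
    rw [Real.log_mul hune hvne, hfact,
      Real.log_mul (by norm_num : (-4:ℝ) ≠ 0) (mul_ne_zero hs1 hs2),
      Real.log_mul hs1 hs2]
    have h8 : Real.log (-4 : ℝ) = Real.log 4 := by
      rw [show (-4:ℝ) = -(4:ℝ) by norm_num, Real.log_neg_eq_log]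
    rw [h8, hF]; ring
  rw [intervalIntegrable_iff] at hFint ⊢
  exact hFint.congr (ae_restrict_of_ae heq)

set_option maxHeartbeats 1000000 in
lemma aux_trigM1 (t : ℝ) :
    ((2 * cos (2*π*t))^2 - 7*(2 * cos (2*π*t)) + 9) *
    ((2 * cos (2*π*(t+1/4)))^2 - 7*(2 * cos (2*π*(t+1/4))) + 9) *
    ((2 * cos (2*π*(t+1/2)))^2 - 7*(2 * cos (2*π*(t+1/2))) + 9) *
    ((2 * cos (2*π*(t+3/4)))^2 - 7*(2 * cos (2*π*(t+3/4))) + 9) =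
    (2 * cos (2*π*(4*t)))^2 - 679*(2 * cos (2*π*(4*t))) - 833 := by
  have e1 : 2*π*(t+1/4) = 2*π*t + π/2 := by ring
  have e2 : 2*π*(t+1/2) = 2*π*t + π := by ring
  have e3 : 2*π*(t+3/4) = (2*π*t + π) + π/2 := by ring
  have e4 : 2*π*(4*t) = 2*(2*(2*π*t)) := by ring
  rw [e1, e2, e3, e4, Real.cos_add (2*π*t + π), Real.cos_add (2*π*t), Real.cos_add (2*π*t),
    Real.sin_add (2*π*t), Real.cos_two_mul, Real.cos_two_mul, Real.cos_pi_div_two,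
    Real.sin_pi_div_two, Real.cos_pi, Real.sin_pi]
  set c := cos (2*π*t)
  set s := sin (2*π*t)
  have hs : s^2 + c^2 = 1 := Real.sin_sq_add_cos_sq (2*π*t)
  linear_combination (-8748 + 1296*s^2 + 12096*c^2 - 1984*c^2*s^2 + 256*c^4 + 256*c^4*s^2
    - 256*c^6) * hs

set_option maxHeartbeats 1000000 in
lemma aux_trigM2 (t : ℝ) :
    ((2 * cos (2*π*t))^2 + 7*(2 * cos (2*π*t)) - 17) *
    ((2 * cos (2*π*(t+1/3)))^2 + 7*(2 * cos (2*π*(t+1/3))) - 17) *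
    ((2 * cos (2*π*(t+2/3)))^2 + 7*(2 * cos (2*π*(t+2/3))) - 17) =
    (2 * cos (2*π*(3*t+1/2)))^2 - 679*(2 * cos (2*π*(3*t+1/2))) - 833 := by
  have e1 : 2*π*(t+1/3) = 2*π*t + (π - π/3) := by ring
  have e2 : 2*π*(t+2/3) = 2*π*t + (π + π/3) := by ring
  have e3 : 2*π*(3*t+1/2) = 3*(2*π*t) + π := by ring
  have hc1 : cos (π + π/3) = -(1/2) := by
    rw [Real.cos_add, Real.cos_pi, Real.sin_pi, Real.cos_pi_div_three]; ring
  have hs1 : sin (π + π/3) = -(Real.sqrt 3/2) := by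
    rw [Real.sin_add, Real.cos_pi, Real.sin_pi, Real.sin_pi_div_three]; ring
  rw [e1, e2, e3, Real.cos_add (2*π*t) (π - π/3), Real.cos_add (2*π*t) (π + π/3),
    Real.cos_add (3*(2*π*t)), Real.cos_three_mul, Real.cos_pi_sub, Real.sin_pi_sub,
    Real.cos_pi_div_three, Real.sin_pi_div_three, Real.cos_pi, Real.sin_pi, hc1, hs1]
  set c := cos (2*π*t)
  set s := sin (2*π*t)
  set r := Real.sqrt 3
  have hs : s^2 + c^2 = 1 := Real.sin_sq_add_cos_sq (2*π*t)
  have hr : r^2 = 3 := Real.sq_sqrt (by norm_num)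
  linear_combination (1411*s^2 - 51*s^4 - 17*s^4*r^2 - 1400*c*s^2 + 42*c*s^4 + 14*c*s^4*r^2
    - 102*c^2*s^2 + 12*c^2*s^4 + 4*c^2*s^4*r^2 + 28*c^3*s^2 - 8*c^4*s^2) * hr +
    (4080 - 153*s^2 - 4074*c + 126*c*s^2 - 117*c^2 + 36*c^2*s^2 - 42*c^3 - 60*c^4) * hs

lemma aux_zsum (t : ℝ) :
    Complex.exp (2 * Real.pi * t * Complex.I) + (Complex.exp (2 * Real.pi * t * Complex.I))⁻¹ =
      ((2 * Real.cos (2 * π * t) : ℝ) : ℂ) := by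
  rw [← Complex.exp_neg]
  have h1 : (2 * ↑Real.pi * ↑t * Complex.I : ℂ) = ((2 * π * t : ℝ) : ℂ) * Complex.I := by
    push_cast; ring
  rw [h1, ← neg_mul, Complex.exp_mul_I, Complex.exp_mul_I]
  push_cast
  simp only [Complex.cos_neg, Complex.sin_neg]
  ring

lemma aux_abs_eval_quartic (p q : ℝ) (t : ℝ) (w : ℂ)
    (hw : w = Complex.exp (2 * Real.pi * t * Complex.I)) :
    ‖w^4 + (p:ℂ)*w^3 + (q:ℂ)*w^2 + (p:ℂ)*w + 1‖ =
      |(2 * Real.cos (2*π*t))^2 + p*(2*Real.cos (2*π*t)) + (q - 2)| := by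
  have hw0 : w ≠ 0 := by rw [hw]; exact Complex.exp_ne_zero _
  have habs1 : ‖w‖ = 1 := by
    rw [hw, Complex.norm_exp]
    have h2 : (2 * ↑Real.pi * ↑t * Complex.I : ℂ).re = 0 := by simp
    rw [h2, Real.exp_zero]
  have hfact : w^4 + (p:ℂ)*w^3 + (q:ℂ)*w^2 + (p:ℂ)*w + 1 =
      w^2 * ((w + w⁻¹)^2 + (p:ℂ)*(w + w⁻¹) + ((q:ℂ) - 2)) := by
    field_simp
    ring
  rw [hfact, hw, aux_zsum t]
  rw [norm_mul, norm_pow, ← hw, habs1]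
  have h3 : ((2 * Real.cos (2 * π * t) : ℝ) : ℂ)^2 + (p:ℂ) * ((2 * Real.cos (2 * π * t) : ℝ) : ℂ)
      + ((q:ℂ) - 2) = (((2 * Real.cos (2*π*t))^2 + p*(2*Real.cos (2*π*t)) + (q - 2) : ℝ) : ℂ) := by
    push_cast; ring
  rw [h3, Complex.norm_real, Real.norm_eq_abs]
  ring

/-- `log |Δ₁(e^{2πit})|` as a real trigonometric function. -/
noncomputable def mF1 : ℝ → ℝ :=
  fun t => Real.log ((2 * Real.cos (2*π*t))^2 - 7*(2 * Real.cos (2*π*t)) + 9)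

/-- `log |Δ₂(e^{2πit})|` as a real trigonometric function. -/
noncomputable def mF2 : ℝ → ℝ :=
  fun t => Real.log ((2 * Real.cos (2*π*t))^2 + 7*(2 * Real.cos (2*π*t)) - 17)

/-- The corresponding function for the common power-transform polynomial. -/
noncomputable def mG : ℝ → ℝ :=
  fun t => Real.log ((2 * Real.cos (2*π*t))^2 - 679*(2 * Real.cos (2*π*t)) - 833)

lemma aux_cosper (t : ℝ) : Real.cos (2*π*(t+1)) = Real.cos (2*π*t) := by
  rw [show 2*π*(t+1) = 2*π*t + 2*π by ring, Real.cos_add_two_pi]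

lemma mF1_per : Function.Periodic mF1 1 := fun t => by unfold mF1; rw [aux_cosper]
lemma mF2_per : Function.Periodic mF2 1 := fun t => by unfold mF2; rw [aux_cosper]
lemma mG_per : Function.Periodic mG 1 := fun t => by unfold mG; rw [aux_cosper]

lemma mF1_II : ∀ a b : ℝ, IntervalIntegrable mF1 volume a b := by
  have hr0 : (0:ℝ) ≤ Real.sqrt 13 := Real.sqrt_nonneg _
  have hr : Real.sqrt 13 ^ 2 = 13 := Real.sq_sqrt (by norm_num)
  have hb1 : 3 < Real.sqrt 13 := by nlinarith
  have hb2 : Real.sqrt 13 < 4 := by nlinarith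
  have hEq : mF1 = fun t => Real.log ((2 * Real.cos (2 * π * t) - (7 - Real.sqrt 13)/2) *
      (2 * Real.cos (2 * π * t) - (7 + Real.sqrt 13)/2)) := by
    funext t
    unfold mF1
    congr 1
    linear_combination (1/4) * hr
  rw [hEq]
  exact fun a b => aux_quadII _ _ (by nlinarith) (by nlinarith)
    (fun x h1 h2 => by nlinarith) a b

lemma mF2_II : ∀ a b : ℝ, IntervalIntegrable mF2 volume a b := by
  have hr0 : (0:ℝ) ≤ Real.sqrt 117 := Real.sqrt_nonneg _
  have hr : Real.sqrt 117 ^ 2 = 117 := Real.sq_sqrt (by norm_num)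
  have hb1 : 10 < Real.sqrt 117 := by nlinarith
  have hb2 : Real.sqrt 117 < 11 := by nlinarith
  have hEq : mF2 = fun t => Real.log ((2 * Real.cos (2 * π * t) - (-7 + Real.sqrt 117)/2) *
      (2 * Real.cos (2 * π * t) - (-7 - Real.sqrt 117)/2)) := by
    funext t
    unfold mF2
    congr 1
    linear_combination (1/4) * hr
  rw [hEq]
  exact fun a b => aux_quadII _ _ (by nlinarith) (by nlinarith)
    (fun x h1 h2 => by nlinarith) a b

lemma mG_II : ∀ a b : ℝ, IntervalIntegrable mG volume a b := by
  have hr0 : (0:ℝ) ≤ Real.sqrt 464373 := Real.sqrt_nonneg _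
  have hr : Real.sqrt 464373 ^ 2 = 464373 := Real.sq_sqrt (by norm_num)
  have hb1 : 681 < Real.sqrt 464373 := by nlinarith
  have hb2 : Real.sqrt 464373 < 682 := by nlinarith
  have hEq : mG = fun t => Real.log ((2 * Real.cos (2 * π * t) - (679 - Real.sqrt 464373)/2) *
      (2 * Real.cos (2 * π * t) - (679 + Real.sqrt 464373)/2)) := by
    funext t
    unfold mG
    congr 1
    linear_combination (1/4) * hr
  rw [hEq]
  exact fun a b => aux_quadII _ _ (by nlinarith) (by nlinarith)
    (fun x h1 h2 => by nlinarith) a b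

lemma main1 : 4 * (∫ t in (0:ℝ)..1, mF1 t) = ∫ t in (0:ℝ)..1, mG t := by
  have hπ := Real.pi_pos
  -- shifted integrals agree
  have hsh : ∀ k : ℝ, (∫ t in (0:ℝ)..1, mF1 (t + k)) = ∫ t in (0:ℝ)..1, mF1 t := by
    intro k
    rw [intervalIntegral.integral_comp_add_right mF1 k]
    have h := mF1_per.intervalIntegral_add_eq k 0
    simpa [add_comm] using h
  have hish : ∀ k : ℝ, IntervalIntegrable (fun t => mF1 (t + k)) volume 0 1 := by
    intro k
    have := (mF1_II (0 + k) (1 + k)).comp_add_right k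
    simpa using this
  -- sum of shifts integral
  have hsum : (∫ t in (0:ℝ)..1, (mF1 t + mF1 (t+1/4) + mF1 (t+1/2) + mF1 (t+3/4))) =
      4 * ∫ t in (0:ℝ)..1, mF1 t := by
    rw [intervalIntegral.integral_add (((mF1_II 0 1).add (hish (1/4))).add (hish (1/2)))
        (hish (3/4)),
      intervalIntegral.integral_add ((mF1_II 0 1).add (hish (1/4))) (hish (1/2)),
      intervalIntegral.integral_add (mF1_II 0 1) (hish (1/4)),
      hsh (1/4), hsh (1/2), hsh (3/4)]
    ring
  -- a.e. equality with mG (4 t)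
  have hr0 : (0:ℝ) ≤ Real.sqrt 464373 := Real.sqrt_nonneg _
  have hr : Real.sqrt 464373 ^ 2 = 464373 := Real.sq_sqrt (by norm_num)
  set U : ℝ := (679 - Real.sqrt 464373)/2 with hU
  set V : ℝ := (679 + Real.sqrt 464373)/2 with hV
  have hc1 : Set.Countable {t : ℝ | Real.cos (2*π*(4*t)) = U/2} := by
    refine Set.Countable.mono ?_ (aux_cos_level_countable (8*π) 0 (U/2) (by positivity))
    intro t ht
    simp only [Set.mem_setOf_eq] at ht ⊢
    rw [show 8*π*t + 0 = 2*π*(4*t) by ring]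
    exact ht
  have hc2 : Set.Countable {t : ℝ | Real.cos (2*π*(4*t)) = V/2} := by
    refine Set.Countable.mono ?_ (aux_cos_level_countable (8*π) 0 (V/2) (by positivity))
    intro t ht
    simp only [Set.mem_setOf_eq] at ht ⊢
    rw [show 8*π*t + 0 = 2*π*(4*t) by ring]
    exact ht
  have hae : ∀ᵐ t : ℝ, t ∉ ({t : ℝ | Real.cos (2*π*(4*t)) = U/2} ∪
      {t : ℝ | Real.cos (2*π*(4*t)) = V/2}) := by
    rw [← MeasureTheory.measure_eq_zero_iff_ae_notMem]
    exact (hc1.union hc2).measure_zero _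
  have hcongr : (∫ t in (0:ℝ)..1, (mF1 t + mF1 (t+1/4) + mF1 (t+1/2) + mF1 (t+3/4))) =
      ∫ t in (0:ℝ)..1, mG (4*t) := by
    refine intervalIntegral.integral_congr_ae ?_
    refine hae.mono fun t ht _ => ?_
    simp only [Set.mem_union, Set.mem_setOf_eq, not_or] at ht
    obtain ⟨h1, h2⟩ := ht
    have hQne : (2 * Real.cos (2*π*(4*t)))^2 - 679*(2 * Real.cos (2*π*(4*t))) - 833 ≠ 0 := by
      have hfac : (2 * Real.cos (2*π*(4*t)))^2 - 679*(2 * Real.cos (2*π*(4*t))) - 833 =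
          (2 * Real.cos (2*π*(4*t)) - 2*(U/2)) * (2 * Real.cos (2*π*(4*t)) - 2*(V/2)) := by
        rw [hU, hV]; linear_combination (1/4) * hr
      rw [hfac]
      exact mul_ne_zero (fun h => h1 (by linarith [sub_eq_zero.1 h]))
        (fun h => h2 (by linarith [sub_eq_zero.1 h]))
    have hP := aux_trigM1 t
    have hprod_ne : ((2 * cos (2*π*t))^2 - 7*(2 * cos (2*π*t)) + 9) *
        ((2 * cos (2*π*(t+1/4)))^2 - 7*(2 * cos (2*π*(t+1/4))) + 9) *
        ((2 * cos (2*π*(t+1/2)))^2 - 7*(2 * cos (2*π*(t+1/2))) + 9) *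
        ((2 * cos (2*π*(t+3/4)))^2 - 7*(2 * cos (2*π*(t+3/4))) + 9) ≠ 0 := by
      rw [hP]; exact hQne
    have ha1 : ((2 * cos (2*π*t))^2 - 7*(2 * cos (2*π*t)) + 9) ≠ 0 :=
      fun h => hprod_ne (by rw [h]; ring)
    have ha2 : ((2 * cos (2*π*(t+1/4)))^2 - 7*(2 * cos (2*π*(t+1/4))) + 9) ≠ 0 :=
      fun h => hprod_ne (by rw [h]; ring)
    have ha3 : ((2 * cos (2*π*(t+1/2)))^2 - 7*(2 * cos (2*π*(t+1/2))) + 9) ≠ 0 :=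
      fun h => hprod_ne (by rw [h]; ring)
    have ha4 : ((2 * cos (2*π*(t+3/4)))^2 - 7*(2 * cos (2*π*(t+3/4))) + 9) ≠ 0 :=
      fun h => hprod_ne (by rw [h]; ring)
    show mF1 t + mF1 (t+1/4) + mF1 (t+1/2) + mF1 (t+3/4) = mG (4*t)
    unfold mF1 mG
    rw [← hP, Real.log_mul (mul_ne_zero (mul_ne_zero ha1 ha2) ha3) ha4,
      Real.log_mul (mul_ne_zero ha1 ha2) ha3, Real.log_mul ha1 ha2]
  have hcomp : (∫ t in (0:ℝ)..1, mG (4*t)) = ∫ t in (0:ℝ)..1, mG t := by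
    rw [intervalIntegral.integral_comp_mul_left mG (by norm_num : (4:ℝ) ≠ 0)]
    have h2 := mG_per.intervalIntegral_add_zsmul_eq 4 0 mG_II
    norm_num at h2 ⊢
    rw [h2]
    ring
  rw [← hsum, hcongr, hcomp]

lemma main2 : 3 * (∫ t in (0:ℝ)..1, mF2 t) = ∫ t in (0:ℝ)..1, mG t := by
  have hπ := Real.pi_pos
  have hsh : ∀ k : ℝ, (∫ t in (0:ℝ)..1, mF2 (t + k)) = ∫ t in (0:ℝ)..1, mF2 t := by
    intro k
    rw [intervalIntegral.integral_comp_add_right mF2 k]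
    have h := mF2_per.intervalIntegral_add_eq k 0
    simpa [add_comm] using h
  have hish : ∀ k : ℝ, IntervalIntegrable (fun t => mF2 (t + k)) volume 0 1 := by
    intro k
    have := (mF2_II (0 + k) (1 + k)).comp_add_right k
    simpa using this
  have hsum : (∫ t in (0:ℝ)..1, (mF2 t + mF2 (t+1/3) + mF2 (t+2/3))) =
      3 * ∫ t in (0:ℝ)..1, mF2 t := by
    rw [intervalIntegral.integral_add ((mF2_II 0 1).add (hish (1/3))) (hish (2/3)),
      intervalIntegral.integral_add (mF2_II 0 1) (hish (1/3)),
      hsh (1/3), hsh (2/3)]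
    ring
  have hr0 : (0:ℝ) ≤ Real.sqrt 464373 := Real.sqrt_nonneg _
  have hr : Real.sqrt 464373 ^ 2 = 464373 := Real.sq_sqrt (by norm_num)
  set U : ℝ := (679 - Real.sqrt 464373)/2 with hU
  set V : ℝ := (679 + Real.sqrt 464373)/2 with hV
  have hc1 : Set.Countable {t : ℝ | Real.cos (2*π*(3*t+1/2)) = U/2} := by
    refine Set.Countable.mono ?_ (aux_cos_level_countable (6*π) π (U/2) (by positivity))
    intro t ht
    simp only [Set.mem_setOf_eq] at ht ⊢
    rw [show 6*π*t + π = 2*π*(3*t+1/2) by ring]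
    exact ht
  have hc2 : Set.Countable {t : ℝ | Real.cos (2*π*(3*t+1/2)) = V/2} := by
    refine Set.Countable.mono ?_ (aux_cos_level_countable (6*π) π (V/2) (by positivity))
    intro t ht
    simp only [Set.mem_setOf_eq] at ht ⊢
    rw [show 6*π*t + π = 2*π*(3*t+1/2) by ring]
    exact ht
  have hae : ∀ᵐ t : ℝ, t ∉ ({t : ℝ | Real.cos (2*π*(3*t+1/2)) = U/2} ∪
      {t : ℝ | Real.cos (2*π*(3*t+1/2)) = V/2}) := by
    rw [← MeasureTheory.measure_eq_zero_iff_ae_notMem]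
    exact (hc1.union hc2).measure_zero _
  have hcongr : (∫ t in (0:ℝ)..1, (mF2 t + mF2 (t+1/3) + mF2 (t+2/3))) =
      ∫ t in (0:ℝ)..1, mG (3*t+1/2) := by
    refine intervalIntegral.integral_congr_ae ?_
    refine hae.mono fun t ht _ => ?_
    simp only [Set.mem_union, Set.mem_setOf_eq, not_or] at ht
    obtain ⟨h1, h2⟩ := ht
    have hQne : (2 * Real.cos (2*π*(3*t+1/2)))^2 - 679*(2 * Real.cos (2*π*(3*t+1/2))) - 833 ≠ 0 := by
      have hfac : (2 * Real.cos (2*π*(3*t+1/2)))^2 - 679*(2 * Real.cos (2*π*(3*t+1/2))) - 833 =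
          (2 * Real.cos (2*π*(3*t+1/2)) - 2*(U/2)) * (2 * Real.cos (2*π*(3*t+1/2)) - 2*(V/2)) := by
        rw [hU, hV]; linear_combination (1/4) * hr
      rw [hfac]
      exact mul_ne_zero (fun h => h1 (by linarith [sub_eq_zero.1 h]))
        (fun h => h2 (by linarith [sub_eq_zero.1 h]))
    have hP := aux_trigM2 t
    have hprod_ne : ((2 * cos (2*π*t))^2 + 7*(2 * cos (2*π*t)) - 17) *
        ((2 * cos (2*π*(t+1/3)))^2 + 7*(2 * cos (2*π*(t+1/3))) - 17) *
        ((2 * cos (2*π*(t+2/3)))^2 + 7*(2 * cos (2*π*(t+2/3))) - 17) ≠ 0 := by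
      rw [hP]; exact hQne
    have ha1 : ((2 * cos (2*π*t))^2 + 7*(2 * cos (2*π*t)) - 17) ≠ 0 :=
      fun h => hprod_ne (by rw [h]; ring)
    have ha2 : ((2 * cos (2*π*(t+1/3)))^2 + 7*(2 * cos (2*π*(t+1/3))) - 17) ≠ 0 :=
      fun h => hprod_ne (by rw [h]; ring)
    have ha3 : ((2 * cos (2*π*(t+2/3)))^2 + 7*(2 * cos (2*π*(t+2/3))) - 17) ≠ 0 :=
      fun h => hprod_ne (by rw [h]; ring)
    show mF2 t + mF2 (t+1/3) + mF2 (t+2/3) = mG (3*t+1/2)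
    unfold mF2 mG
    rw [← hP, Real.log_mul (mul_ne_zero ha1 ha2) ha3, Real.log_mul ha1 ha2]
  have hcomp : (∫ t in (0:ℝ)..1, mG (3*t+1/2)) = ∫ t in (0:ℝ)..1, mG t := by
    rw [intervalIntegral.integral_comp_mul_add mG (by norm_num : (3:ℝ) ≠ 0) (1/2)]
    have h2 := mG_per.intervalIntegral_add_zsmul_eq 3 (1/2) mG_II
    have h3 := mG_per.intervalIntegral_add_eq (1/2 : ℝ) 0
    norm_num at h2 h3 ⊢
    rw [h2, h3]
    ring
  rw [← hsum, hcongr, hcomp]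

end MahlerAux

section MainThm
open Real MeasureTheory intervalIntegral

/-- `6 · ln m(Δ₂) = 8 · ln m(Δ₁)` for the Alexander polynomials of `9₄₈` and
`12n642`; equivalently `|t₁|⁶ = |t₂|⁸` for the largest roots. -/
theorem six_log_mahler_eq_eight_log_mahler :
    6 * Real.log (mahlerMeasureCircle (X ^ 4 + 7 * X ^ 3 - 15 * X ^ 2 + 7 * X + 1)) =
      8 * Real.log (mahlerMeasureCircle (X ^ 4 - 7 * X ^ 3 + 11 * X ^ 2 - 7 * X + 1)) := by
  rw [mahlerMeasureCircle, mahlerMeasureCircle, Real.log_exp, Real.log_exp]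
  have h2 : (∫ t in (0:ℝ)..1, Real.log (‖
      (X ^ 4 + 7 * X ^ 3 - 15 * X ^ 2 + 7 * X + 1 : Polynomial ℂ).eval
        (Complex.exp (2 * Real.pi * t * Complex.I))‖)) = ∫ t in (0:ℝ)..1, mF2 t := by
    refine intervalIntegral.integral_congr fun t _ => ?_
    set w : ℂ := Complex.exp (2 * Real.pi * t * Complex.I) with hw
    have he : (X ^ 4 + 7 * X ^ 3 - 15 * X ^ 2 + 7 * X + 1 : Polynomial ℂ).eval w =
        w^4 + ((7:ℝ):ℂ)*w^3 + ((-15:ℝ):ℂ)*w^2 + ((7:ℝ):ℂ)*w + 1 := by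
      push_cast
      simp
      ring
    rw [he, aux_abs_eval_quartic 7 (-15) t w hw, Real.log_abs]
    unfold mF2
    ring_nf
  have h1 : (∫ t in (0:ℝ)..1, Real.log (‖
      (X ^ 4 - 7 * X ^ 3 + 11 * X ^ 2 - 7 * X + 1 : Polynomial ℂ).eval
        (Complex.exp (2 * Real.pi * t * Complex.I))‖)) = ∫ t in (0:ℝ)..1, mF1 t := by
    refine intervalIntegral.integral_congr fun t _ => ?_
    set w : ℂ := Complex.exp (2 * Real.pi * t * Complex.I) with hw
    have he : (X ^ 4 - 7 * X ^ 3 + 11 * X ^ 2 - 7 * X + 1 : Polynomial ℂ).eval w =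
        w^4 + ((-7:ℝ):ℂ)*w^3 + ((11:ℝ):ℂ)*w^2 + ((-7:ℝ):ℂ)*w + 1 := by
      push_cast
      simp
      ring
    rw [he, aux_abs_eval_quartic (-7) 11 t w hw, Real.log_abs]
    unfold mF1
    ring_nf
  rw [h1, h2]
  linarith [main1, main2]

end MainThm
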